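/- Let S and U be nonempty finite types, let P be a transition kernel on S with actions U, let r be a reward function, let 0 ≤ γ < 1 and α > 0. Let π be a policy and let Q₁ satisfy Q₁ = Γ_π Q₁. Define the improved policy π'(s,u) = exp(Q₁ s u/α)/∑_{u'} exp(Q₁ s u'/α) (the Boltzmann policy of Q₁, which is the agreement reached by strictly nested Stein variational negotiation), and let Q₂ satisfy Q₂ = Γ_{π'} Q₂. Then Q₂ s u ≥ Q₁ s u for all s ∈ S and u ∈ U. (Paper's Lemma 6.2, Policy Improvement.) -/

import Mathlib

/-- The soft Bellman operator of a policy `π`. -/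
noncomputable def softBellman {S U : Type*} [Fintype S] [Fintype U]
    (P : S → U → S → ℝ) (r : S → U → ℝ) (γ α : ℝ) (π : S → U → ℝ)
    (Q : S → U → ℝ) : S → U → ℝ :=
  fun s u => r s u +
    γ * ∑ s', P s u s' * ∑ u', π s' u' * (Q s' u' - α * Real.log (π s' u'))

/-- Gibbs' inequality: the entropy-regularized value of any policy is at most
the log-partition function. -/
lemma gibbs_ineq {U : Type*} [Fintype U] [Nonempty U] {α : ℝ} (hα : 0 < α)
    (Q p : U → ℝ) (hp0 : ∀ u, 0 ≤ p u) (hp1 : ∑ u, p u = 1) :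
    ∑ u, p u * (Q u - α * Real.log (p u)) ≤
      α * Real.log (∑ u, Real.exp (Q u / α)) := by
  set Z := ∑ u, Real.exp (Q u / α) with hZdef
  have hZpos : 0 < Z :=
    Finset.sum_pos (fun u _ => Real.exp_pos _) Finset.univ_nonempty
  have key : ∀ u, p u * (Q u - α * Real.log (p u)) ≤
      α * Real.exp (Q u / α) / Z - α * p u + α * (p u * Real.log Z) := by
    intro u
    rcases eq_or_lt_of_le (hp0 u) with h | h
    · rw [← h]
      have : 0 ≤ α * Real.exp (Q u / α) / Z := by positivity
      simp only [zero_mul, mul_zero]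
      linarith
    · have hx : (0:ℝ) < Real.exp (Q u / α) / (p u * Z) := by positivity
      have hlog := Real.log_le_sub_one_of_pos hx
      have h1 : Real.log (Real.exp (Q u / α) / (p u * Z)) =
          Q u / α - Real.log (p u) - Real.log Z := by
        rw [Real.log_div (Real.exp_ne_zero _) (by positivity),
          Real.log_exp, Real.log_mul (ne_of_gt h) (ne_of_gt hZpos)]
        ring
      rw [h1] at hlog
      have h2 := mul_le_mul_of_nonneg_left hlog (by positivity : (0:ℝ) ≤ α * p u)
      have e1 : α * p u * (Q u / α - Real.log (p u) - Real.log Z) =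
          p u * (Q u - α * Real.log (p u)) - α * (p u * Real.log Z) := by
        field_simp
      have e2 : α * p u * (Real.exp (Q u / α) / (p u * Z) - 1) =
          α * Real.exp (Q u / α) / Z - α * p u := by
        field_simp
      rw [e1, e2] at h2
      linarith
  calc ∑ u, p u * (Q u - α * Real.log (p u))
      ≤ ∑ u, (α * Real.exp (Q u / α) / Z - α * p u + α * (p u * Real.log Z)) :=
        Finset.sum_le_sum fun u _ => key u
    _ = (∑ u, α * Real.exp (Q u / α)) / Z - α * (∑ u, p u)
          + α * ((∑ u, p u) * Real.log Z) := by
        rw [Finset.sum_add_distrib, Finset.sum_sub_distrib, ← Finset.sum_div,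
          ← Finset.mul_sum]
        congr 1
        · rw [← Finset.mul_sum]
        · rw [← Finset.mul_sum, ← Finset.sum_mul]
    _ = α * Real.log Z := by
        rw [hp1, ← Finset.mul_sum, ← hZdef, mul_div_assoc, div_self hZpos.ne']
        ring

theorem soft_policy_improvement
    {S U : Type*} [Fintype S] [Fintype U] [Nonempty S] [Nonempty U]
    (P : S → U → S → ℝ) (hP0 : ∀ s u s', 0 ≤ P s u s')
    (hP1 : ∀ s u, ∑ s', P s u s' = 1)
    (r : S → U → ℝ) (γ α : ℝ) (hγ0 : 0 ≤ γ) (hγ1 : γ < 1) (hα : 0 < α)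
    (π : S → U → ℝ) (hπ0 : ∀ s u, 0 ≤ π s u) (hπ1 : ∀ s, ∑ u, π s u = 1)
    (Q₁ : S → U → ℝ) (hQ₁ : Q₁ = softBellman P r γ α π Q₁)
    (π' : S → U → ℝ)
    (hπ' : ∀ s u, π' s u = Real.exp (Q₁ s u / α) / ∑ u', Real.exp (Q₁ s u' / α))
    (Q₂ : S → U → ℝ) (hQ₂ : Q₂ = softBellman P r γ α π' Q₂) :
    ∀ s u, Q₁ s u ≤ Q₂ s u := by
  set Z : S → ℝ := fun s => ∑ u, Real.exp (Q₁ s u / α) with hZdef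
  have hZpos : ∀ s, 0 < Z s := fun s =>
    Finset.sum_pos (fun u _ => Real.exp_pos _) Finset.univ_nonempty
  have hπ'pos : ∀ s u, 0 < π' s u := by
    intro s u; rw [hπ']
    exact div_pos (Real.exp_pos _) (hZpos s)
  have hπ'1 : ∀ s, ∑ u, π' s u = 1 := by
    intro s
    simp only [hπ']
    rw [← Finset.sum_div, div_self (hZpos s).ne']
  -- value of the Boltzmann policy equals the log-partition function
  have hval : ∀ s, ∑ u, π' s u * (Q₁ s u - α * Real.log (π' s u))
      = α * Real.log (Z s) := by
    intro s
    have hterm : ∀ u, π' s u * (Q₁ s u - α * Real.log (π' s u))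
        = π' s u * (α * Real.log (Z s)) := by
      intro u
      congr 1
      rw [hπ', Real.log_div (Real.exp_ne_zero _) (hZpos s).ne', Real.log_exp]
      field_simp
      ring
    rw [Finset.sum_congr rfl (fun u _ => hterm u), ← Finset.sum_mul, hπ'1, one_mul]
  -- policy improvement step: Q₁ ≤ Γ_{π'} Q₁
  have himp : ∀ s, ∑ u, π s u * (Q₁ s u - α * Real.log (π s u)) ≤
      ∑ u, π' s u * (Q₁ s u - α * Real.log (π' s u)) := by
    intro s
    rw [hval s]
    exact gibbs_ineq hα (Q₁ s) (π s) (hπ0 s) (hπ1 s)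
  have hstep : ∀ s u, Q₁ s u ≤ softBellman P r γ α π' Q₁ s u := by
    intro s u
    conv_lhs => rw [hQ₁]
    unfold softBellman
    apply add_le_add le_rfl
    apply mul_le_mul_of_nonneg_left _ hγ0
    exact Finset.sum_le_sum fun s' _ =>
      mul_le_mul_of_nonneg_left (himp s') (hP0 s u s')
  -- contraction argument
  have hne : (Finset.univ : Finset (S × U)).Nonempty := Finset.univ_nonempty
  set M : ℝ := Finset.univ.sup' hne (fun p : S × U => Q₁ p.1 p.2 - Q₂ p.1 p.2)
    with hMdef
  have hM : ∀ s u, Q₁ s u - Q₂ s u ≤ M := fun s u =>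
    Finset.le_sup' (f := fun p : S × U => Q₁ p.1 p.2 - Q₂ p.1 p.2)
      (Finset.mem_univ (s, u))
  have hdiff : ∀ s u,
      softBellman P r γ α π' Q₁ s u - softBellman P r γ α π' Q₂ s u ≤ γ * M := by
    intro s u
    have hinner : ∀ s',
        ∑ u', π' s' u' * (Q₁ s' u' - α * Real.log (π' s' u'))
          - ∑ u', π' s' u' * (Q₂ s' u' - α * Real.log (π' s' u')) ≤ M := by
      intro s'
      rw [← Finset.sum_sub_distrib]
      calc ∑ u', (π' s' u' * (Q₁ s' u' - α * Real.log (π' s' u'))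
            - π' s' u' * (Q₂ s' u' - α * Real.log (π' s' u')))
          = ∑ u', π' s' u' * (Q₁ s' u' - Q₂ s' u') := by
            apply Finset.sum_congr rfl; intros; ring
        _ ≤ ∑ u', π' s' u' * M :=
            Finset.sum_le_sum fun u' _ =>
              mul_le_mul_of_nonneg_left (hM s' u') (hπ'pos s' u').le
        _ = M := by rw [← Finset.sum_mul, hπ'1, one_mul]
    have houter : ∑ s', P s u s' * ∑ u', π' s' u' * (Q₁ s' u' - α * Real.log (π' s' u'))
        - ∑ s', P s u s' * ∑ u', π' s' u' * (Q₂ s' u' - α * Real.log (π' s' u')) ≤ M := by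
      rw [← Finset.sum_sub_distrib]
      calc ∑ s', (P s u s' * ∑ u', π' s' u' * (Q₁ s' u' - α * Real.log (π' s' u'))
            - P s u s' * ∑ u', π' s' u' * (Q₂ s' u' - α * Real.log (π' s' u')))
          = ∑ s', P s u s' * ((∑ u', π' s' u' * (Q₁ s' u' - α * Real.log (π' s' u')))
              - ∑ u', π' s' u' * (Q₂ s' u' - α * Real.log (π' s' u'))) := by
            apply Finset.sum_congr rfl; intros; ring
        _ ≤ ∑ s', P s u s' * M :=
            Finset.sum_le_sum fun s' _ =>
              mul_le_mul_of_nonneg_left (hinner s') (hP0 s u s')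
        _ = M := by rw [← Finset.sum_mul, hP1, one_mul]
    unfold softBellman
    have := mul_le_mul_of_nonneg_left houter hγ0
    linarith
  have hMle : M ≤ γ * M := by
    obtain ⟨⟨s, u⟩, _, hmax⟩ := Finset.exists_mem_eq_sup' hne
      (fun p : S × U => Q₁ p.1 p.2 - Q₂ p.1 p.2)
    have h1 := hstep s u
    have h2 := hdiff s u
    have : Q₂ s u = softBellman P r γ α π' Q₂ s u := by rw [← hQ₂]
    have hMeq : M = Q₁ s u - Q₂ s u := hmax
    linarith
  have hM0 : M ≤ 0 := by nlinarith
  intro s u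
  have := hM s u
  linarith
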